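/- Let p > −1/2, let P be a real positive semidefinite 2×2 matrix whose upper-left entry is nonzero, let ψ ∈ ℝ, let (A,B) = Ξₚ(P,ψ), and set E := A − i·B. Then E is a Hermite–Biehler function: |E(conj z)| < |E(z)| for every z ∈ ℂ with Im z > 0, and E(t) ≠ 0 for every t ∈ ℝ. -/

import Mathlib

set_option maxHeartbeats 1000000


open Matrix MeasureTheory Filter

noncomputable section

def matJ : Matrix (Fin 2) (Fin 2) ℝ := !![0, -1; 1, 0]

def Dpsi (p ψ a : ℝ) : Matrix (Fin 2) (Fin 2) ℝ :=
  if p = 0 then !![1, 0; ψ * Real.log a, 1]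
  else !![1, 0; ψ / (2 * p), 1] * !![a ^ p, 0; 0, a ^ (-p)] * !![1, 0; -ψ / (2 * p), 1]

def HPpsi (p ψ : ℝ) (P : Matrix (Fin 2) (Fin 2) ℝ) (a : ℝ) : Matrix (Fin 2) (Fin 2) ℝ :=
  Dpsi p ψ a * P * (Dpsi p ψ a)ᵀ

def SatRec (p : ℝ) (P : Matrix (Fin 2) (Fin 2) ℝ) (ψ : ℝ) (α β : ℕ → ℝ) : Prop :=
  α 0 = 1 ∧ β 0 = 0 ∧ ∀ n : ℕ,
    !![α (n + 1), β (n + 1)] =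
      (-1 / (((n : ℝ) + 1) * (2 * p + (n : ℝ) + 1))) •
        (!![α n, β n] * (P * matJ * !![2 * p + (n : ℝ) + 1, 0; ψ, (n : ℝ) + 1]))

def genF (c : ℕ → ℝ) (z : ℂ) : ℂ := ∑' n : ℕ, (c n : ℂ) * z ^ n

def rowAB (p ψ : ℝ) (α β : ℕ → ℝ) (a : ℝ) (z : ℂ) : Matrix (Fin 1) (Fin 2) ℂ :=
  !![((a ^ p : ℝ) : ℂ) * genF α ((a : ℂ) * z), ((a ^ p : ℝ) : ℂ) * genF β ((a : ℂ) * z)] *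
    ((Dpsi p ψ a)⁻¹).map Complex.ofReal

/-! ### Auxiliary lemmas -/

lemma hb3_auxSummable {c : ℕ → ℝ} (h : ∀ z : ℂ, ∃ s, HasSum (fun n : ℕ => (c n : ℂ) * z ^ n) s)
    {r : ℝ} (hr : 0 ≤ r) : Summable (fun n : ℕ => ((n : ℝ) + 1) * (|c n| * r ^ n)) := by
  obtain ⟨s, hs⟩ := h ((2 * r + 1 : ℝ) : ℂ)
  have hpos : (0 : ℝ) < 2 * r + 1 := by linarith
  have h0 : Tendsto (fun n : ℕ => |c n| * (2 * r + 1) ^ n) atTop (nhds 0) := by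
    have h1 := (hs.summable.tendsto_atTop_zero).norm
    have : (fun n : ℕ => ‖(c n : ℂ) * ((2 * r + 1 : ℝ) : ℂ) ^ n‖)
        = fun n : ℕ => |c n| * (2 * r + 1) ^ n := by
      funext n
      rw [norm_mul, norm_pow, Complex.norm_real, Complex.norm_real]
      simp [Real.norm_eq_abs, abs_of_pos hpos]
    rwa [this, norm_zero] at h1
  obtain ⟨C, hC⟩ := h0.bddAbove_range
  have hCmem : ∀ n, |c n| * (2 * r + 1) ^ n ≤ C := fun n => hC (Set.mem_range_self n)
  have hsum : Summable (fun n : ℕ => C * (((n : ℝ) + 1) * (1 / 2) ^ n)) := by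
    apply Summable.mul_left
    have h1 : Summable (fun n : ℕ => (n : ℝ) * (1 / 2) ^ n) := by
      simpa using summable_pow_mul_geometric_of_norm_lt_one (R := ℝ) 1 (r := 1/2) (by norm_num)
    have h2 : Summable (fun n : ℕ => ((1 : ℝ) / 2) ^ n) :=
      summable_geometric_of_lt_one (by norm_num) (by norm_num)
    simpa [add_mul, one_mul] using h1.add h2
  apply Summable.of_nonneg_of_le (fun n => by positivity) _ hsum
  intro n
  have key : r ^ n ≤ (2 * r + 1) ^ n * (1 / 2) ^ n := by
    rw [← mul_pow]
    exact pow_le_pow_left₀ hr (by linarith) n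
  calc ((n : ℝ) + 1) * (|c n| * r ^ n)
      ≤ ((n : ℝ) + 1) * (|c n| * ((2 * r + 1) ^ n * (1 / 2) ^ n)) := by
        apply mul_le_mul_of_nonneg_left (mul_le_mul_of_nonneg_left key (abs_nonneg _)) (by positivity)
    _ = (|c n| * (2 * r + 1) ^ n) * (((n : ℝ) + 1) * (1 / 2) ^ n) := by ring
    _ ≤ C * (((n : ℝ) + 1) * (1 / 2) ^ n) := by
        apply mul_le_mul_of_nonneg_right (hCmem n) (by positivity)

lemma hb3_auxDeriv {c : ℕ → ℝ} {A : ℂ → ℂ}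
    (hA : ∀ z : ℂ, HasSum (fun n : ℕ => (c n : ℂ) * z ^ n) (A z))
    (hsum : ∀ r : ℝ, 0 ≤ r → Summable (fun n : ℕ => ((n : ℝ) + 1) * (|c n| * r ^ n)))
    (z : ℂ) :
    HasDerivAt A (∑' n : ℕ, (c n : ℂ) * ((n : ℂ) * z ^ (n - 1))) z ∧
    HasSum (fun n : ℕ => (c n : ℂ) * ((n : ℂ) * z ^ (n - 1)))
      (∑' n : ℕ, (c n : ℂ) * ((n : ℂ) * z ^ (n - 1))) := by
  set R : ℝ := ‖z‖ + 1 with hR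
  have hR1 : (1 : ℝ) ≤ R := by
    have := norm_nonneg z
    simp only [hR]
    linarith
  have hu : Summable (fun n : ℕ => ((n : ℝ) + 1) * (|c n| * R ^ n)) :=
    hsum R (by positivity)
  have hbound : ∀ (n : ℕ) (y : ℂ), y ∈ Metric.ball (0 : ℂ) R →
      ‖(c n : ℂ) * ((n : ℂ) * y ^ (n - 1))‖ ≤ ((n : ℝ) + 1) * (|c n| * R ^ n) := by
    intro n y hy
    have hyR : ‖y‖ ≤ R := by
      have := mem_ball_zero_iff.mp hy
      linarith
    have : ‖(c n : ℂ) * ((n : ℂ) * y ^ (n - 1))‖ = |c n| * ((n : ℝ) * ‖y‖ ^ (n - 1)) := by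
      simp [norm_mul, norm_pow, Complex.norm_real, Real.norm_eq_abs,
        abs_of_nonneg (by positivity : (0:ℝ) ≤ ((n:ℕ):ℝ))]
    rw [this]
    rcases n with _ | m
    · simp only [Nat.cast_zero, zero_mul, mul_zero]
      positivity
    · have h1 : ‖y‖ ^ m ≤ R ^ m := pow_le_pow_left₀ (norm_nonneg _) hyR m
      have h2 : R ^ m ≤ R ^ (m + 1) := by
        calc R ^ m = R ^ m * 1 := by ring
        _ ≤ R ^ m * R := by nlinarith [pow_nonneg (le_trans zero_le_one hR1) m]
        _ = R ^ (m + 1) := by ring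
      push_cast
      calc |c m.succ| * (((m : ℝ) + 1) * ‖y‖ ^ m) ≤ |c m.succ| * (((m : ℝ) + 1) * R ^ (m+1)) := by
            push_cast
            apply mul_le_mul_of_nonneg_left _ (abs_nonneg _)
            apply mul_le_mul_of_nonneg_left (le_trans h1 h2) (by positivity)
        _ ≤ ((m : ℝ) + 1 + 1) * (|c m.succ| * R ^ (m + 1)) := by
            nlinarith [abs_nonneg (c (m+1)), pow_nonneg (le_trans zero_le_one hR1) (m+1),
              mul_nonneg (abs_nonneg (c (m+1))) (pow_nonneg (le_trans zero_le_one hR1) (m+1))]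
  have hder : ∀ (n : ℕ) (y : ℂ), y ∈ Metric.ball (0 : ℂ) R →
      HasDerivAt (fun w : ℂ => (c n : ℂ) * w ^ n) ((c n : ℂ) * ((n : ℂ) * y ^ (n - 1))) y := by
    intro n y _
    exact (hasDerivAt_pow n y).const_mul _
  have hz : z ∈ Metric.ball (0 : ℂ) R := by
    simp [hR, mem_ball_zero_iff]
  have h0 : (0 : ℂ) ∈ Metric.ball (0 : ℂ) R := by
    simp only [Metric.mem_ball, dist_zero_right, norm_zero]
    linarith
  have hg0 : Summable (fun n : ℕ => (c n : ℂ) * (0 : ℂ) ^ n) := (hA 0).summable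
  have key := hasDerivAt_tsum_of_isPreconnected hu Metric.isOpen_ball
    ((convex_ball (0 : ℂ) R).isPreconnected) hder hbound h0 hg0 hz
  have hAeq : A = fun y : ℂ => ∑' n : ℕ, (c n : ℂ) * y ^ n := by
    funext y
    exact ((hA y).tsum_eq).symm
  constructor
  · rw [hAeq]
    exact key
  · apply Summable.hasSum
    apply Summable.of_norm_bounded hu
    intro n
    exact hbound n z hz

lemma hb3_shift_up {f : ℕ → ℂ} {s : ℂ} (h0 : f 0 = 0)
    (h : HasSum f s) : HasSum (fun n : ℕ => f (n + 1)) s := by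
  apply (hasSum_nat_add_iff (f := f) 1).mpr
  simpa [h0] using h

lemma hb3_odeGen {α β γ : ℕ → ℝ} {A B : ℂ → ℂ} {c1 c2 c3 : ℝ}
    (hA : ∀ z : ℂ, HasSum (fun n : ℕ => (α n : ℂ) * z ^ n) (A z))
    (hB : ∀ z : ℂ, HasSum (fun n : ℕ => (β n : ℂ) * z ^ n) (B z))
    (hb0 : β 0 = 0)
    (hrec : ∀ n : ℕ, ((n : ℝ) + 1) * γ (n + 1) = c1 * α n + c2 * β n + c3 * β (n + 1))
    {w : ℂ} {DC : ℂ}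
    (hDC : HasSum (fun n : ℕ => (γ n : ℂ) * ((n : ℂ) * w ^ (n - 1))) DC) :
    w * DC = (c1 : ℂ) * (w * A w) + (c2 : ℂ) * (w * B w) + (c3 : ℂ) * B w := by
  have h1 : HasSum (fun n : ℕ => (n : ℂ) * (γ n : ℂ) * w ^ n) (w * DC) := by
    have := hDC.mul_left w
    convert this using 2 with n
    · rfl
    rcases n with _ | m
    · simp
    · simp only [Nat.add_sub_cancel]
      push_cast
      ring
  have h2 : HasSum (fun n : ℕ => ((n : ℂ) + 1) * (γ (n + 1) : ℂ) * w ^ (n + 1)) (w * DC) := by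
    have := hb3_shift_up (f := fun n : ℕ => (n : ℂ) * (γ n : ℂ) * w ^ n) (by simp) h1
    convert this using 2 with n
    push_cast
    ring
  have hAw1 : HasSum (fun n : ℕ => (α n : ℂ) * w ^ (n + 1)) (w * A w) := by
    have := (hA w).mul_left w
    convert this using 2 with n
    · rfl
    rw [pow_succ]
    ring
  have hBw1 : HasSum (fun n : ℕ => (β n : ℂ) * w ^ (n + 1)) (w * B w) := by
    have := (hB w).mul_left w
    convert this using 2 with n
    · rfl
    rw [pow_succ]
    ring
  have hBs : HasSum (fun n : ℕ => (β (n + 1) : ℂ) * w ^ (n + 1)) (B w) :=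
    hb3_shift_up (f := fun n : ℕ => (β n : ℂ) * w ^ n) (by simp [hb0]) (hB w)
  have h3 : HasSum (fun n : ℕ => ((n : ℂ) + 1) * (γ (n + 1) : ℂ) * w ^ (n + 1))
      ((c1 : ℂ) * (w * A w) + (c2 : ℂ) * (w * B w) + (c3 : ℂ) * B w) := by
    have := ((hAw1.mul_left (c1 : ℂ)).add (hBw1.mul_left (c2 : ℂ))).add (hBs.mul_left (c3 : ℂ))
    convert this using 2 with n
    · rfl
    have hc : (((n : ℝ) + 1) * γ (n + 1) : ℂ)
        = ((c1 * α n + c2 * β n + c3 * β (n + 1) : ℝ) : ℂ) := by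
      exact_mod_cast congrArg Complex.ofReal (hrec n)
    push_cast at hc
    linear_combination w ^ (n + 1) * hc
  exact h2.unique h3

lemma hb3_conj_comp {f : ℝ → ℂ} {f' : ℂ} {a : ℝ} (hf : HasDerivAt f f' a) :
    HasDerivAt (fun t : ℝ => (starRingEnd ℂ) (f t)) ((starRingEnd ℂ) f') a := by
  have := (Complex.conjCLE.toContinuousLinearMap.hasFDerivAt (x := f a)).comp_hasDerivAt a hf
  exact this

lemma hb3_im_comp {f : ℝ → ℂ} {f' : ℂ} {a : ℝ} (hf : HasDerivAt f f' a) :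
    HasDerivAt (fun t : ℝ => (f t).im) f'.im a := by
  have := (Complex.imCLM.hasFDerivAt (x := f a)).comp_hasDerivAt a hf
  exact this

lemma hb3_re_comp {f : ℝ → ℂ} {f' : ℂ} {a : ℝ} (hf : HasDerivAt f f' a) :
    HasDerivAt (fun t : ℝ => (f t).re) f'.re a := by
  have := (Complex.reCLM.hasFDerivAt (x := f a)).comp_hasDerivAt a hf
  exact this

lemma hb3_param {F : ℂ → ℂ} {DF : ℂ → ℂ} (hF : ∀ w : ℂ, HasDerivAt F (DF w) w)
    (z : ℂ) (a : ℝ) :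
    HasDerivAt (fun t : ℝ => F ((t : ℂ) * z)) (DF ((a : ℂ) * z) * z) a := by
  have houter : HasDerivAt (fun w : ℂ => F (w * z)) (DF ((a : ℂ) * z) * z) ((a : ℂ)) := by
    have h1 : HasDerivAt (fun w : ℂ => w * z) z (a : ℂ) := hasDerivAt_mul_const z
    exact (hF ((a : ℂ) * z)).comp (a : ℂ) h1
  exact houter.comp_ofReal

lemma hb3_normSq_comp {f : ℝ → ℂ} {f' : ℂ} {a : ℝ} (hf : HasDerivAt f f' a) :
    HasDerivAt (fun t : ℝ => Complex.normSq (f t))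
      (2 * (((starRingEnd ℂ) (f a)) * f').re) a := by
  have h1 := (hb3_conj_comp hf).mul hf
  have h2 := hb3_re_comp h1
  have hfun : (fun t : ℝ => ((starRingEnd ℂ) (f t) * f t).re)
      = fun t : ℝ => Complex.normSq (f t) := by
    funext t
    simp only [Complex.normSq_apply, Complex.mul_re, Complex.conj_re, Complex.conj_im]
    ring
  simp only [Pi.mul_apply] at h2
  rw [hfun] at h2
  convert h2 using 1
  simp only [Complex.add_re, Complex.mul_re, Complex.conj_re, Complex.conj_im]
  ring

lemma hb3_derivPhi {A B DA DB : ℂ → ℂ} {q11 q12 q22 pp ψ : ℝ}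
    (hA' : ∀ w : ℂ, HasDerivAt A (DA w) w) (hB' : ∀ w : ℂ, HasDerivAt B (DB w) w)
    (hODEA : ∀ w : ℂ, w * DA w = -(q12 : ℂ) * (w * A w) - (q22 : ℂ) * (w * B w) + (ψ : ℂ) * B w)
    (hODEB : ∀ w : ℂ, w * DB w
      = (q11 : ℂ) * (w * A w) + (q12 : ℂ) * (w * B w) - 2 * (pp : ℂ) * B w)
    (z : ℂ) {a : ℝ} (ha : 0 < a) :
    HasDerivAt (fun t : ℝ => (B ((t : ℂ) * z) * (starRingEnd ℂ) (A ((t : ℂ) * z))).im)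
      (z.im * (q11 * Complex.normSq (A ((a : ℂ) * z))
          + 2 * q12 * ((A ((a : ℂ) * z)) * (starRingEnd ℂ) (B ((a : ℂ) * z))).re
          + q22 * Complex.normSq (B ((a : ℂ) * z)))
        - (2 * pp / a) * (B ((a : ℂ) * z) * (starRingEnd ℂ) (A ((a : ℂ) * z))).im) a := by
  have hBc : HasDerivAt (fun t : ℝ => B ((t : ℂ) * z)) (DB ((a : ℂ) * z) * z) a :=
    hb3_param hB' z a
  have hAc : HasDerivAt (fun t : ℝ => A ((t : ℂ) * z)) (DA ((a : ℂ) * z) * z) a :=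
    hb3_param hA' z a
  have hAconj := hb3_conj_comp hAc
  have hmul := hBc.mul hAconj
  have him := hb3_im_comp hmul
  simp only [Pi.mul_apply] at him
  convert him using 1
  have ha0 : (a : ℝ) ≠ 0 := ne_of_gt ha
  have hac0 : (a : ℂ) ≠ 0 := by exact_mod_cast ha0
  apply mul_left_cancel₀ ha0
  have e1 : (((a : ℂ) * z) * DB ((a : ℂ) * z)) * (starRingEnd ℂ) (A ((a : ℂ) * z))
        + B ((a : ℂ) * z) * (starRingEnd ℂ) (((a : ℂ) * z) * DA ((a : ℂ) * z))
      = (a : ℂ) * (DB ((a : ℂ) * z) * z * (starRingEnd ℂ) (A ((a : ℂ) * z))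
        + B ((a : ℂ) * z) * (starRingEnd ℂ) (DA ((a : ℂ) * z) * z)) := by
    simp only [_root_.map_mul, Complex.conj_ofReal]
    ring
  have key : (a : ℝ) * ((DB ((a : ℂ) * z) * z * (starRingEnd ℂ) (A ((a : ℂ) * z))
        + B ((a : ℂ) * z) * (starRingEnd ℂ) (DA ((a : ℂ) * z) * z)).im)
      = ((((a : ℂ) * z) * DB ((a : ℂ) * z)) * (starRingEnd ℂ) (A ((a : ℂ) * z))
        + B ((a : ℂ) * z) * (starRingEnd ℂ) (((a : ℂ) * z) * DA ((a : ℂ) * z))).im := by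
    rw [e1]
    simp [Complex.mul_im]
  rw [key, hODEA ((a : ℂ) * z), hODEB ((a : ℂ) * z)]
  set x : ℂ := A ((a : ℂ) * z) with hx
  set y : ℂ := B ((a : ℂ) * z) with hy
  have h2pp : (a : ℝ) * (z.im * (q11 * Complex.normSq x + 2 * q12 * (x * (starRingEnd ℂ) y).re
      + q22 * Complex.normSq y) - 2 * pp / a * (y * (starRingEnd ℂ) x).im)
      = a * z.im * (q11 * Complex.normSq x + 2 * q12 * (x * (starRingEnd ℂ) y).re
      + q22 * Complex.normSq y) - 2 * pp * (y * (starRingEnd ℂ) x).im := by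
    field_simp
  rw [h2pp]
  simp only [Complex.add_im, Complex.sub_im, Complex.mul_im, Complex.mul_re, Complex.add_re,
    Complex.sub_re, Complex.neg_re, Complex.neg_im, Complex.ofReal_re, Complex.ofReal_im,
    Complex.conj_re, Complex.conj_im, Complex.normSq_apply, Complex.ofReal_mul,
    Complex.ofReal_ofNat, Complex.re_ofNat, Complex.im_ofNat]
  ring

lemma hb3_norm_genF_le {c : ℕ → ℝ} {A : ℂ → ℂ}
    (hA : ∀ z : ℂ, HasSum (fun n : ℕ => (c n : ℂ) * z ^ n) (A z)) {r : ℝ}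
    (hs : Summable (fun n : ℕ => |c n| * r ^ n)) {w : ℂ} (hw : ‖w‖ ≤ r) :
    ‖A w‖ ≤ ∑' n : ℕ, |c n| * r ^ n := by
  have h1 : ∀ n : ℕ, ‖(c n : ℂ) * w ^ n‖ ≤ |c n| * r ^ n := by
    intro n
    rw [norm_mul, norm_pow, Complex.norm_real, Real.norm_eq_abs]
    exact mul_le_mul_of_nonneg_left (pow_le_pow_left₀ (norm_nonneg w) hw n) (abs_nonneg _)
  have hsum2 : Summable (fun n : ℕ => ‖(c n : ℂ) * w ^ n‖) :=
    Summable.of_nonneg_of_le (fun n => norm_nonneg _) h1 hs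
  calc ‖A w‖ = ‖∑' n : ℕ, (c n : ℂ) * w ^ n‖ := by rw [(hA w).tsum_eq]
    _ ≤ ∑' n : ℕ, ‖(c n : ℂ) * w ^ n‖ := norm_tsum_le_tsum_norm hsum2
    _ ≤ ∑' n : ℕ, |c n| * r ^ n := Summable.tsum_le_tsum h1 hsum2 hs

lemma hb3_norm_genF_le' {c : ℕ → ℝ} {B : ℂ → ℂ}
    (hB : ∀ z : ℂ, HasSum (fun n : ℕ => (c n : ℂ) * z ^ n) (B z)) (hc0 : c 0 = 0) {r : ℝ}
    (hs : Summable (fun n : ℕ => |c (n + 1)| * r ^ n)) {w : ℂ} (hw : ‖w‖ ≤ r) :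
    ‖B w‖ ≤ ‖w‖ * ∑' n : ℕ, |c (n + 1)| * r ^ n := by
  have hs2 : HasSum (fun n : ℕ => (c (n + 1) : ℂ) * w ^ (n + 1)) (B w) :=
    hb3_shift_up (f := fun n : ℕ => (c n : ℂ) * w ^ n) (by simp [hc0]) (hB w)
  have h1 : ∀ n : ℕ, ‖(c (n + 1) : ℂ) * w ^ (n + 1)‖ ≤ ‖w‖ * (|c (n + 1)| * r ^ n) := by
    intro n
    rw [norm_mul, norm_pow, Complex.norm_real, Real.norm_eq_abs, pow_succ]
    have := pow_le_pow_left₀ (norm_nonneg w) hw n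
    calc |c (n + 1)| * (‖w‖ ^ n * ‖w‖) ≤ |c (n + 1)| * (r ^ n * ‖w‖) := by
          apply mul_le_mul_of_nonneg_left
            (mul_le_mul_of_nonneg_right this (norm_nonneg _)) (abs_nonneg _)
      _ = ‖w‖ * (|c (n + 1)| * r ^ n) := by ring
  have hsum2 : Summable (fun n : ℕ => ‖(c (n + 1) : ℂ) * w ^ (n + 1)‖) :=
    Summable.of_nonneg_of_le (fun n => norm_nonneg _) h1 (hs.mul_left ‖w‖)
  calc ‖B w‖ = ‖∑' n : ℕ, (c (n + 1) : ℂ) * w ^ (n + 1)‖ := by rw [hs2.tsum_eq]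
    _ ≤ ∑' n : ℕ, ‖(c (n + 1) : ℂ) * w ^ (n + 1)‖ := norm_tsum_le_tsum_norm hsum2
    _ ≤ ∑' n : ℕ, ‖w‖ * (|c (n + 1)| * r ^ n) := Summable.tsum_le_tsum h1 hsum2 (hs.mul_left ‖w‖)
    _ = ‖w‖ * ∑' n : ℕ, |c (n + 1)| * r ^ n := tsum_mul_left

lemma hb3_psd_quad1 {q11 q12 q22 : ℝ} (h11 : 0 ≤ q11) (h22 : 0 ≤ q22)
    (hdet : q12 ^ 2 ≤ q11 * q22) (u v : ℝ) :
    0 ≤ q11 * u ^ 2 + 2 * q12 * (u * v) + q22 * v ^ 2 := by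
  rcases eq_or_lt_of_le h11 with h | h
  · have hq12 : q12 = 0 := by nlinarith [sq_nonneg q12]
    rw [← h, hq12]
    nlinarith [sq_nonneg v]
  · nlinarith [sq_nonneg (q11 * u + q12 * v), mul_nonneg (sub_nonneg.mpr hdet) (sq_nonneg v)]

lemma hb3_psd_quad {q11 q12 q22 : ℝ} (h11 : 0 ≤ q11) (h22 : 0 ≤ q22)
    (hdet : q12 ^ 2 ≤ q11 * q22) (x y : ℂ) :
    0 ≤ q11 * Complex.normSq x + 2 * q12 * (x * (starRingEnd ℂ) y).re
      + q22 * Complex.normSq y := by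
  have h1 := hb3_psd_quad1 h11 h22 hdet x.re y.re
  have h2 := hb3_psd_quad1 h11 h22 hdet x.im y.im
  simp only [Complex.normSq_apply, Complex.mul_re, Complex.conj_re, Complex.conj_im]
  nlinarith [h1, h2]

lemma hb3_mono {f f' : ℝ → ℝ} {ε δ : ℝ} (hε : 0 < ε)
    (hd : ∀ a : ℝ, 0 < a → HasDerivAt f (f' a) a)
    (hge : ∀ a : ℝ, ε < a → a < δ → 0 ≤ f' a) :
    MonotoneOn f (Set.Icc ε δ) := by
  apply monotoneOn_of_deriv_nonneg (convex_Icc ε δ)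
  · intro a ha
    exact (hd a (lt_of_lt_of_le hε ha.1)).continuousAt.continuousWithinAt
  · intro a ha
    rw [interior_Icc] at ha
    exact ((hd a (hε.trans ha.1)).differentiableAt).differentiableWithinAt
  · intro a ha
    rw [interior_Icc] at ha
    rw [(hd a (hε.trans ha.1)).deriv]
    exact hge a ha.1 ha.2

lemma hb3_abs {x y : ℂ} (h : 0 < (y * (starRingEnd ℂ) x).im) :
    ‖(starRingEnd ℂ) x - Complex.I * (starRingEnd ℂ) y‖
      < ‖x - Complex.I * y‖ := by
  rw [Complex.norm_def, Complex.norm_def]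
  apply Real.sqrt_lt_sqrt (Complex.normSq_nonneg _)
  simp only [Complex.normSq_apply, Complex.sub_re, Complex.sub_im, Complex.mul_re, Complex.mul_im,
    Complex.I_re, Complex.I_im, Complex.conj_re, Complex.conj_im] at *
  nlinarith [h]

lemma hb3_bnd {c M r s : ℝ} (h1 : |c| ≤ M) (h2 : |r| ≤ s) : -(M * s) ≤ c * r := by
  have habs : |c * r| ≤ M * s := by
    rw [abs_mul]
    exact mul_le_mul h1 h2 (abs_nonneg r) ((abs_nonneg c).trans h1)
  linarith [neg_abs_le (c * r), habs]

lemma hb3_Vbound {q11 q12 q22 pp ψ t a xr yr : ℝ} (hapos : 0 < a) (hale : a ≤ 1) :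
    -((2 * (|t| * (|q11| + 2 * |q12| + |q22|) + |ψ| + 2 * |pp|) + 1) * (xr^2 + yr^2))
      ≤ 2 * (-(q12) * (a*t) * xr^2 - q22 * (a*t) * (xr*yr) + ψ * (xr*yr)
          + q11 * (a*t) * (xr*yr) + q12 * (a*t) * yr^2 - 2*pp*yr^2) := by
  have hat : |a * t| ≤ |t| := by
    rw [abs_mul, abs_of_pos hapos]
    nlinarith [abs_nonneg t]
  have habs : ∀ q : ℝ, |q * (a*t)| ≤ |q| * |t| := by
    intro q
    rw [abs_mul]
    exact mul_le_mul_of_nonneg_left hat (abs_nonneg q)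
  have hs0 : (0:ℝ) ≤ xr^2 + yr^2 := by positivity
  have hxy : |xr * yr| ≤ xr^2 + yr^2 := by
    rw [abs_le]
    constructor <;> nlinarith [sq_nonneg (xr + yr), sq_nonneg (xr - yr)]
  have hxx : |xr^2| ≤ xr^2 + yr^2 := by
    rw [abs_of_nonneg (sq_nonneg xr)]
    nlinarith [sq_nonneg yr]
  have hyy : |yr^2| ≤ xr^2 + yr^2 := by
    rw [abs_of_nonneg (sq_nonneg yr)]
    nlinarith [sq_nonneg xr]
  have t1 := hb3_bnd (by simpa [abs_neg] using habs q12 : |(-(q12)) * (a*t)| ≤ |q12| * |t|) hxx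
  have t2 := hb3_bnd (by simpa [abs_neg, neg_mul] using habs q22 : |(-(q22 * (a*t)))| ≤ |q22| * |t|) hxy
  have t3 := hb3_bnd (le_refl |ψ|) hxy
  have t4 := hb3_bnd (habs q11) hxy
  have t5 := hb3_bnd (habs q12) hyy
  have t6 := hb3_bnd (by rw [abs_neg, abs_mul]; simp : |(-(2 * pp))| ≤ 2 * |pp|) hyy
  have e2 : -(q22 * (a*t)) * (xr * yr) = - (q22 * (a*t) * (xr*yr)) := by ring
  nlinarith [t1, t2, t3, t4, t5, t6, hs0]


/-- for p > −1/2, P positive semidefinite with nonzero upper-left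
entry, E := A − i·B is a Hermite–Biehler function. -/
theorem statement3 (p : ℝ) (hp : -(1/2 : ℝ) < p)
    (P : Matrix (Fin 2) (Fin 2) ℝ) (hPsd : P.PosSemidef) (h11 : P 0 0 ≠ 0)
    (ψ : ℝ) (α β : ℕ → ℝ) (hrec : SatRec p P ψ α β)
    (A B E : ℂ → ℂ)
    (hA : ∀ z : ℂ, HasSum (fun n : ℕ => (α n : ℂ) * z ^ n) (A z))
    (hB : ∀ z : ℂ, HasSum (fun n : ℕ => (β n : ℂ) * z ^ n) (B z))
    (hE : ∀ z : ℂ, E z = A z - Complex.I * B z) :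
    (∀ z : ℂ, 0 < z.im → ‖E (starRingEnd ℂ z)‖ < ‖E z‖) ∧
    (∀ t : ℝ, E (t : ℂ) ≠ 0) := by
  obtain ⟨ha0, hb0, hrec3⟩ := hrec
  -- facts about P
  have hsymm : P 1 0 = P 0 1 := by
    have h2 := congrFun (congrFun hPsd.1 0) 1
    simp [Matrix.conjTranspose_apply] at h2
    first | exact h2 | exact h2.symm
  have h11nn : 0 ≤ P 0 0 := by
    have := hPsd.dotProduct_mulVec_nonneg ![1, 0]
    simpa [dotProduct, Matrix.mulVec, Fin.sum_univ_two] using this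
  have h22nn : 0 ≤ P 1 1 := by
    have := hPsd.dotProduct_mulVec_nonneg ![0, 1]
    simpa [dotProduct, Matrix.mulVec, Fin.sum_univ_two] using this
  have h11pos : 0 < P 0 0 := lt_of_le_of_ne h11nn (Ne.symm h11)
  have hdet : P 0 1 ^ 2 ≤ P 0 0 * P 1 1 := by
    have := hPsd.dotProduct_mulVec_nonneg ![P 0 1, -(P 0 0)]
    simp [dotProduct, Matrix.mulVec, Fin.sum_univ_two, hsymm] at this
    nlinarith [this, h11pos]
  have hpn : ∀ n : ℕ, (0:ℝ) < 2 * p + (n:ℝ) + 1 := by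
    intro n
    have : (0:ℝ) ≤ (n:ℝ) := Nat.cast_nonneg n
    linarith
  -- scalar recurrences
  have hβr : ∀ n : ℕ, (2 * p + (n:ℝ) + 1) * β (n + 1) = P 0 0 * α n + P 0 1 * β n := by
    intro n
    have h := congrFun (congrFun (hrec3 n) 0) 1
    simp [Matrix.mul_apply, Matrix.vecMul, dotProduct, Fin.sum_univ_two, matJ,
      Matrix.smul_apply, hsymm] at h
    have hne1 : ((n:ℝ) + 1) ≠ (0:ℝ) := by positivity
    have hne2 : (2 * p + (n:ℝ) + 1) ≠ 0 := ne_of_gt (hpn n)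
    field_simp at h
    apply mul_left_cancel₀ hne1
    linear_combination ((n:ℝ) + 1) * h
  have hαr : ∀ n : ℕ, ((n:ℝ) + 1) * α (n + 1)
      = -(P 0 1 * α n + P 1 1 * β n) + ψ * β (n + 1) := by
    intro n
    have h := congrFun (congrFun (hrec3 n) 0) 0
    simp [Matrix.mul_apply, Matrix.vecMul, dotProduct, Fin.sum_univ_two, matJ,
      Matrix.smul_apply, hsymm] at h
    have hb := hβr n
    have hne1 : ((n:ℝ) + 1) ≠ (0:ℝ) := by positivity
    have hne2 : (2 * p + (n:ℝ) + 1) ≠ 0 := ne_of_gt (hpn n)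
    field_simp at h
    apply mul_left_cancel₀ hne2
    linear_combination h - ψ * hb
  -- summability machinery
  have hexA : ∀ z : ℂ, ∃ s, HasSum (fun n : ℕ => (α n : ℂ) * z ^ n) s := fun z => ⟨A z, hA z⟩
  have hexB : ∀ z : ℂ, ∃ s, HasSum (fun n : ℕ => (β n : ℂ) * z ^ n) s := fun z => ⟨B z, hB z⟩
  have hsumA : ∀ r : ℝ, 0 ≤ r → Summable (fun n : ℕ => ((n : ℝ) + 1) * (|α n| * r ^ n)) :=
    fun r hr => hb3_auxSummable hexA hr
  have hsumB : ∀ r : ℝ, 0 ≤ r → Summable (fun n : ℕ => ((n : ℝ) + 1) * (|β n| * r ^ n)) :=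
    fun r hr => hb3_auxSummable hexB hr
  have hsumA' : ∀ r : ℝ, 0 ≤ r → Summable (fun n : ℕ => |α n| * r ^ n) := by
    intro r hr
    apply Summable.of_nonneg_of_le (fun n => by positivity) _ (hsumA r hr)
    intro n
    nlinarith [abs_nonneg (α n), pow_nonneg hr n, Nat.cast_nonneg (α := ℝ) n,
      mul_nonneg (abs_nonneg (α n)) (pow_nonneg hr n)]
  have hsumB' : ∀ r : ℝ, 0 ≤ r → Summable (fun n : ℕ => |β n| * r ^ n) := by
    intro r hr
    apply Summable.of_nonneg_of_le (fun n => by positivity) _ (hsumB r hr)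
    intro n
    nlinarith [abs_nonneg (β n), pow_nonneg hr n, Nat.cast_nonneg (α := ℝ) n,
      mul_nonneg (abs_nonneg (β n)) (pow_nonneg hr n)]
  have hsumB'' : ∀ r : ℝ, 0 < r → Summable (fun n : ℕ => |β (n + 1)| * r ^ n) := by
    intro r hr
    have h1 := (summable_nat_add_iff (f := fun n : ℕ => |β n| * r ^ n) 1).mpr (hsumB' r hr.le)
    have h2 := h1.mul_left (r⁻¹)
    apply h2.congr
    intro n
    field_simp [pow_succ]
    ring
  -- derivatives
  set DA : ℂ → ℂ := fun w => ∑' n : ℕ, (α n : ℂ) * ((n : ℂ) * w ^ (n - 1)) with hDAdef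
  set DB : ℂ → ℂ := fun w => ∑' n : ℕ, (β n : ℂ) * ((n : ℂ) * w ^ (n - 1)) with hDBdef
  have hA' : ∀ w : ℂ, HasDerivAt A (DA w) w := fun w => (hb3_auxDeriv hA hsumA w).1
  have hB' : ∀ w : ℂ, HasDerivAt B (DB w) w := fun w => (hb3_auxDeriv hB hsumB w).1
  have hDAsum : ∀ w : ℂ, HasSum (fun n : ℕ => (α n : ℂ) * ((n : ℂ) * w ^ (n - 1))) (DA w) :=
    fun w => (hb3_auxDeriv hA hsumA w).2
  have hDBsum : ∀ w : ℂ, HasSum (fun n : ℕ => (β n : ℂ) * ((n : ℂ) * w ^ (n - 1))) (DB w) :=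
    fun w => (hb3_auxDeriv hB hsumB w).2
  -- ODEs
  have hODEA : ∀ w : ℂ, w * DA w = -(P 0 1 : ℂ) * (w * A w) - (P 1 1 : ℂ) * (w * B w)
      + (ψ : ℂ) * B w := by
    intro w
    have hrec' : ∀ n : ℕ, ((n:ℝ) + 1) * α (n + 1)
        = (-(P 0 1)) * α n + (-(P 1 1)) * β n + ψ * β (n + 1) := fun n => by
      linear_combination hαr n
    have := hb3_odeGen hA hB hb0 hrec' (hDAsum w)
    push_cast at this ⊢
    linear_combination this
  have hODEB : ∀ w : ℂ, w * DB w = (P 0 0 : ℂ) * (w * A w) + (P 0 1 : ℂ) * (w * B w)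
      - 2 * (p : ℂ) * B w := by
    intro w
    have hrec' : ∀ n : ℕ, ((n:ℝ) + 1) * β (n + 1)
        = (P 0 0) * α n + (P 0 1) * β n + (-(2*p)) * β (n + 1) := fun n => by
      linear_combination hβr n
    have := hb3_odeGen hA hB hb0 hrec' (hDBsum w)
    push_cast at this ⊢
    linear_combination this
  -- values at zero
  have hA0 : A 0 = 1 := by
    have h1 : HasSum (fun n : ℕ => (α n : ℂ) * (0:ℂ) ^ n) ((α 0 : ℂ)) := by
      have := hasSum_single (f := fun n : ℕ => (α n : ℂ) * (0:ℂ) ^ n) 0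
        (fun b hb => by simp [zero_pow hb])
      simpa using this
    have := (hA 0).unique h1
    rw [this, ha0]
    simp
  have hB0 : B 0 = 0 := by
    have h1 : HasSum (fun n : ℕ => (β n : ℂ) * (0:ℂ) ^ n) ((β 0 : ℂ)) := by
      have := hasSum_single (f := fun n : ℕ => (β n : ℂ) * (0:ℂ) ^ n) 0
        (fun b hb => by simp [zero_pow hb])
      simpa using this
    have := (hB 0).unique h1
    rw [this, hb0]
    simp
  -- conjugation symmetry
  have hAconj : ∀ z : ℂ, A ((starRingEnd ℂ) z) = (starRingEnd ℂ) (A z) := by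
    intro z
    have h1 := Complex.conjCLE.toContinuousLinearMap.hasSum (hA z)
    have h2 : (fun n : ℕ => Complex.conjCLE.toContinuousLinearMap ((α n : ℂ) * z ^ n))
        = fun n : ℕ => (α n : ℂ) * ((starRingEnd ℂ) z) ^ n := by
      funext n
      simp [_root_.map_mul, map_pow, Complex.conj_ofReal]
    rw [h2] at h1
    exact (hA _).unique h1
  have hBconj : ∀ z : ℂ, B ((starRingEnd ℂ) z) = (starRingEnd ℂ) (B z) := by
    intro z
    have h1 := Complex.conjCLE.toContinuousLinearMap.hasSum (hB z)
    have h2 : (fun n : ℕ => Complex.conjCLE.toContinuousLinearMap ((β n : ℂ) * z ^ n))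
        = fun n : ℕ => (β n : ℂ) * ((starRingEnd ℂ) z) ^ n := by
      funext n
      simp [_root_.map_mul, map_pow, Complex.conj_ofReal]
    rw [h2] at h1
    exact (hB _).unique h1
  -- continuity
  have hAcont : Continuous A := by
    have : Differentiable ℂ A := fun w => (hA' w).differentiableAt
    exact this.continuous
  have hBcont : Continuous B := by
    have : Differentiable ℂ B := fun w => (hB' w).differentiableAt
    exact this.continuous
  constructor
  · -- Part 1
    intro z hz
    have hzne : z ≠ 0 := by
      intro h
      rw [h] at hz
      simp at hz
    have hznorm : 0 < ‖z‖ := norm_pos_iff.mpr hzne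
    have h2p1 : (0:ℝ) < 2 * p + 1 := by linarith
    have hmain : 0 < (B z * (starRingEnd ℂ) (A z)).im := by
      set φ : ℝ → ℝ := fun a => (B ((a:ℂ) * z) * (starRingEnd ℂ) (A ((a:ℂ) * z))).im with hφdef
      set Q : ℝ → ℝ := fun a => P 0 0 * Complex.normSq (A ((a:ℂ) * z))
        + 2 * (P 0 1) * ((A ((a:ℂ) * z)) * (starRingEnd ℂ) (B ((a:ℂ) * z))).re
        + P 1 1 * Complex.normSq (B ((a:ℂ) * z)) with hQdef
      set g : ℝ → ℝ := fun a => a ^ (2 * p) * φ a with hgdef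
      have hQnn : ∀ a : ℝ, 0 ≤ Q a := fun a => hb3_psd_quad h11nn h22nn hdet _ _
      have hφ' : ∀ a : ℝ, 0 < a → HasDerivAt φ (z.im * Q a - (2 * p / a) * φ a) a :=
        fun a haa => hb3_derivPhi hA' hB' hODEA hODEB z haa
      have hg' : ∀ a : ℝ, 0 < a → HasDerivAt g (a ^ (2 * p) * (z.im * Q a)) a := by
        intro a haa
        have h1 : HasDerivAt (fun x : ℝ => x ^ (2 * p)) ((2 * p) * a ^ (2 * p - 1)) a :=
          Real.hasDerivAt_rpow_const (Or.inl (ne_of_gt haa))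
        have h2 := h1.mul (hφ' a haa)
        refine h2.congr_deriv ?_
        have hsub : a ^ (2 * p - 1) = a ^ (2 * p) / a := by
          rw [Real.rpow_sub haa, Real.rpow_one]
        rw [hsub]
        have : a ≠ 0 := ne_of_gt haa
        field_simp
        ring
      -- continuity of Q
      have hfAc : Continuous (fun a : ℝ => A ((a:ℂ) * z)) :=
        hAcont.comp (Complex.continuous_ofReal.mul continuous_const)
      have hfBc : Continuous (fun a : ℝ => B ((a:ℂ) * z)) :=
        hBcont.comp (Complex.continuous_ofReal.mul continuous_const)
      have hQc : Continuous Q := by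
        exact ((continuous_const.mul (Complex.continuous_normSq.comp hfAc)).add
          (continuous_const.mul (Complex.continuous_re.comp
            (hfAc.mul (Complex.continuous_conj.comp hfBc))))).add
          (continuous_const.mul (Complex.continuous_normSq.comp hfBc))
      have hQ0 : Q 0 = P 0 0 := by
        simp [hQdef, hA0, hB0]
      obtain ⟨δ, hδpos, hδ1, hδQ⟩ : ∃ δ : ℝ, 0 < δ ∧ δ ≤ 1 ∧
          ∀ a : ℝ, 0 < a → a ≤ δ → P 0 0 / 2 ≤ Q a := by
        have hc := hQc.continuousAt (x := 0)
        rw [Metric.continuousAt_iff] at hc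
        obtain ⟨δ', hδ'pos, hδ'⟩ := hc (P 0 0 / 2) (by positivity)
        refine ⟨min (δ' / 2) 1, by positivity, min_le_right _ _, ?_⟩
        intro a hapos hale
        have h1 : dist a 0 < δ' := by
          rw [Real.dist_eq, sub_zero, abs_of_pos hapos]
          calc a ≤ min (δ' / 2) 1 := hale
            _ ≤ δ' / 2 := min_le_left _ _
            _ < δ' := by linarith
        have := hδ' h1
        rw [Real.dist_eq, hQ0] at this
        have := abs_lt.mp this
        linarith [this.1]
      -- bound and limit of g at 0+
      set MA : ℝ := ∑' n : ℕ, |α n| * ‖z‖ ^ n with hMAdef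
      set MB : ℝ := ∑' n : ℕ, |β (n + 1)| * ‖z‖ ^ n with hMBdef
      have hsumMA : Summable (fun n : ℕ => |α n| * ‖z‖ ^ n) := hsumA' _ (norm_nonneg z)
      have hsumMB : Summable (fun n : ℕ => |β (n + 1)| * ‖z‖ ^ n) := hsumB'' _ hznorm
      have hMA0 : 0 ≤ MA := tsum_nonneg (fun n => by positivity)
      have hMB0 : 0 ≤ MB := tsum_nonneg (fun n => by positivity)
      have hgb : ∀ a : ℝ, 0 < a → a ≤ 1 → |g a| ≤ (‖z‖ * MB * MA) * a ^ (2 * p + 1) := by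
        intro a h1 h2
        have hwn : ‖(a:ℂ) * z‖ = a * ‖z‖ := by
          rw [norm_mul, Complex.norm_real, Real.norm_eq_abs, abs_of_pos h1]
        have hwle : ‖(a:ℂ) * z‖ ≤ ‖z‖ := by
          rw [hwn]
          nlinarith [hznorm]
        have hAb : ‖A ((a:ℂ) * z)‖ ≤ MA := hb3_norm_genF_le hA hsumMA hwle
        have hBb : ‖B ((a:ℂ) * z)‖ ≤ a * (‖z‖ * MB) := by
          have := hb3_norm_genF_le' hB hb0 hsumMB hwle
          rw [hwn] at this
          calc ‖B ((a:ℂ) * z)‖ ≤ a * ‖z‖ * MB := this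
            _ = a * (‖z‖ * MB) := by ring
        have hφb : |φ a| ≤ a * (‖z‖ * MB) * MA := by
          have h3 : |φ a| ≤ ‖B ((a:ℂ) * z) * (starRingEnd ℂ) (A ((a:ℂ) * z))‖ := by
            exact Complex.abs_im_le_norm _
          rw [norm_mul] at h3
          have h4 : ‖(starRingEnd ℂ) (A ((a:ℂ) * z))‖ = ‖A ((a:ℂ) * z)‖ := by
            simp
          rw [h4] at h3
          calc |φ a| ≤ ‖B ((a:ℂ) * z)‖ * ‖A ((a:ℂ) * z)‖ := h3
            _ ≤ (a * (‖z‖ * MB)) * MA := by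
                apply mul_le_mul hBb hAb (norm_nonneg _)
                positivity
        have hrpow : (0:ℝ) < a ^ (2 * p) := Real.rpow_pos_of_pos h1 _
        have hga : |g a| = a ^ (2 * p) * |φ a| := by
          rw [hgdef]
          simp only [abs_mul]
          congr 1
          exact abs_of_pos hrpow
        rw [hga]
        have step : a ^ (2 * p) * |φ a| ≤ a ^ (2 * p) * (a * (‖z‖ * MB) * MA) :=
          mul_le_mul_of_nonneg_left hφb hrpow.le
        calc a ^ (2 * p) * |φ a| ≤ a ^ (2 * p) * (a * (‖z‖ * MB) * MA) := step
          _ = (‖z‖ * MB * MA) * (a ^ (2 * p) * a) := by ring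
          _ = (‖z‖ * MB * MA) * a ^ (2 * p + 1) := by
              rw [Real.rpow_add_one (ne_of_gt h1)]
      have hrpowlim : Tendsto (fun a : ℝ => a ^ (2 * p + 1)) (nhdsWithin 0 (Set.Ioi 0))
          (nhds 0) := by
        have hcont : ContinuousAt (fun a : ℝ => a ^ (2 * p + 1)) 0 :=
          Real.continuousAt_rpow_const 0 (2 * p + 1) (Or.inr h2p1.le)
        have := hcont.continuousWithinAt (s := Set.Ioi (0:ℝ))
        have h0 : (0:ℝ) ^ (2 * p + 1) = 0 := Real.zero_rpow (ne_of_gt h2p1)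
        rw [ContinuousWithinAt, h0] at this
        exact this
      have hg0 : Tendsto g (nhdsWithin 0 (Set.Ioi 0)) (nhds 0) := by
        apply squeeze_zero_norm'
        · filter_upwards [Ioc_mem_nhdsGT (zero_lt_one)] with a ha
          exact hgb a ha.1 ha.2
        · have := hrpowlim.const_mul (‖z‖ * MB * MA)
          simpa using this
      -- monotonicity below δ
      set c0 : ℝ := z.im * (P 0 0 / 2) / (2 * p + 1) with hc0def
      have hc0pos : 0 < c0 := by
        apply div_pos (mul_pos hz (by positivity)) h2p1
      set G : ℝ → ℝ := fun a => g a - c0 * a ^ (2 * p + 1) with hGdef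
      have hG' : ∀ a : ℝ, 0 < a → HasDerivAt G
          (a ^ (2 * p) * (z.im * Q a) - c0 * ((2 * p + 1) * a ^ (2 * p + 1 - 1))) a := by
        intro a haa
        have h1 : HasDerivAt (fun x : ℝ => x ^ (2 * p + 1))
            ((2 * p + 1) * a ^ (2 * p + 1 - 1)) a :=
          Real.hasDerivAt_rpow_const (Or.inl (ne_of_gt haa))
        exact (hg' a haa).sub (h1.const_mul c0)
      have hmono1 : ∀ ε : ℝ, 0 < ε → ε ≤ δ →
          G ε ≤ G δ := by
        intro ε hεpos hεδ
        have hm : MonotoneOn G (Set.Icc ε δ) := by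
          apply hb3_mono hεpos hG'
          intro a ha1 ha2
          have hapos : 0 < a := hεpos.trans ha1
          have hexp : a ^ (2 * p + 1 - 1) = a ^ (2 * p) := by
            norm_num
          rw [hexp]
          have hQa : P 0 0 / 2 ≤ Q a := hδQ a hapos ha2.le
          have hrpownn : (0:ℝ) ≤ a ^ (2 * p) := (Real.rpow_pos_of_pos hapos _).le
          have hc0eq : c0 * (2 * p + 1) = z.im * (P 0 0 / 2) := by
            rw [hc0def]
            field_simp
          have : c0 * ((2 * p + 1) * a ^ (2 * p)) = z.im * (P 0 0 / 2) * a ^ (2 * p) := by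
            calc c0 * ((2 * p + 1) * a ^ (2 * p)) = (c0 * (2 * p + 1)) * a ^ (2 * p) := by ring
              _ = z.im * (P 0 0 / 2) * a ^ (2 * p) := by rw [hc0eq]
          rw [this]
          have : z.im * (P 0 0 / 2) ≤ z.im * Q a :=
            mul_le_mul_of_nonneg_left hQa hz.le
          nlinarith [hrpownn, this]
        exact hm ⟨le_refl ε, hεδ⟩ ⟨hεδ, le_refl δ⟩ hεδ
      have hGlim : Tendsto G (nhdsWithin 0 (Set.Ioi 0)) (nhds 0) := by
        have h2 := hrpowlim.const_mul c0
        have := hg0.sub h2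
        simpa using this
      have hGδ : 0 ≤ G δ := by
        apply le_of_tendsto hGlim
        filter_upwards [Ioc_mem_nhdsGT hδpos] with ε hε
        exact hmono1 ε hε.1 hε.2
      have hgδ : 0 < g δ := by
        have h1 : c0 * δ ^ (2 * p + 1) ≤ g δ := by
          have := hGδ
          rw [hGdef] at this
          simp only [sub_nonneg] at this
          linarith [this]
        have h2 : 0 < c0 * δ ^ (2 * p + 1) :=
          mul_pos hc0pos (Real.rpow_pos_of_pos hδpos _)
        linarith
      -- monotonicity from δ to 1
      have hmono2 : MonotoneOn g (Set.Icc δ 1) := by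
        apply hb3_mono hδpos hg'
        intro a ha1 _
        have hapos : 0 < a := hδpos.trans ha1
        have := hQnn a
        have := (Real.rpow_pos_of_pos hapos (2 * p)).le
        positivity
      have hg1 : g δ ≤ g 1 := hmono2 ⟨le_refl δ, hδ1⟩ ⟨hδ1, le_refl 1⟩ hδ1
      have hg1eq : g 1 = (B z * (starRingEnd ℂ) (A z)).im := by
        rw [hgdef]
        simp only [Real.one_rpow, one_mul, hφdef]
        norm_num
      linarith [hgδ, hg1, hg1eq.symm.le, hg1eq.le]
    rw [hE z, hE ((starRingEnd ℂ) z), hAconj z, hBconj z]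
    exact hb3_abs hmain
  · -- Part 2
    intro t
    rw [hE]
    by_cases ht : t = 0
    · subst ht
      simp only [Complex.ofReal_zero, hA0, hB0]
      simp
    intro hzero
    have htne : (t:ℝ) ≠ 0 := ht
    -- realness on the real axis
    have hAreal : ∀ r : ℝ, (starRingEnd ℂ) (A (r : ℂ)) = A (r : ℂ) := by
      intro r
      rw [← hAconj]
      congr 1
      simp [Complex.conj_ofReal]
    have hBreal : ∀ r : ℝ, (starRingEnd ℂ) (B (r : ℂ)) = B (r : ℂ) := by
      intro r
      rw [← hBconj]
      congr 1
      simp [Complex.conj_ofReal]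
    have hABzero : A (t:ℂ) = 0 ∧ B (t:ℂ) = 0 := by
      have hconj := congrArg (starRingEnd ℂ) hzero
      simp only [map_sub, _root_.map_mul, Complex.conj_I, hAreal t, hBreal t, map_zero] at hconj
      constructor
      · linear_combination (1/2 : ℂ) * hzero + (1/2 : ℂ) * hconj
      · have h1 : Complex.I * B (t:ℂ) - (- Complex.I * B (t:ℂ)) = 0 := by
          linear_combination hconj - hzero
        have h2 : (2 * Complex.I) * B (t:ℂ) = 0 := by linear_combination h1
        have h3 : (2 * Complex.I) ≠ 0 := by
          simp [Complex.I_ne_zero]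
        exact (mul_eq_zero.mp h2).resolve_left h3
    -- the decreasing-energy argument
    set s : ℝ → ℝ := fun a => Complex.normSq (A ((a:ℂ) * (t:ℂ)))
      + Complex.normSq (B ((a:ℂ) * (t:ℂ))) with hsdef
    set Vs : ℝ → ℝ := fun a => 2 * (((starRingEnd ℂ) (A ((a:ℂ) * (t:ℂ))))
        * (DA ((a:ℂ) * (t:ℂ)) * (t:ℂ))).re
      + 2 * (((starRingEnd ℂ) (B ((a:ℂ) * (t:ℂ)))) * (DB ((a:ℂ) * (t:ℂ)) * (t:ℂ))).re with hVsdef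
    have hs' : ∀ a : ℝ, HasDerivAt s (Vs a) a := by
      intro a
      have h1 := hb3_normSq_comp (hb3_param hA' (t:ℂ) a)
      have h2 := hb3_normSq_comp (hb3_param hB' (t:ℂ) a)
      exact h1.add h2
    have hsnn : ∀ a : ℝ, 0 ≤ s a := by
      intro a
      have := Complex.normSq_nonneg (A ((a:ℂ) * (t:ℂ)))
      have := Complex.normSq_nonneg (B ((a:ℂ) * (t:ℂ)))
      rw [hsdef]
      positivity
    set K' : ℝ := 2 * (|t| * (|P 0 0| + 2 * |P 0 1| + |P 1 1|) + |ψ| + 2 * |p|) + 1 with hK'def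
    have hK'pos : 0 < K' := by
      rw [hK'def]
      positivity
    have hVbound : ∀ a : ℝ, 0 < a → a ≤ 1 → -(K' * s a) ≤ a * Vs a := by
      intro a hapos hale
      have hac0 : (a:ℂ) ≠ 0 := by exact_mod_cast (ne_of_gt hapos)
      set w : ℂ := (a:ℂ) * (t:ℂ) with hwdef
      set x : ℂ := A w with hxdef
      set y : ℂ := B w with hydef
      -- realness of x and y
      have hwreal : w = ((a * t : ℝ) : ℂ) := by
        rw [hwdef]
        push_cast
        ring
      have hxim : x.im = 0 := by
        have := hAreal (a * t)
        rw [← hwreal] at this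
        rw [← hxdef] at this
        have h2 := congrArg Complex.im this
        rw [Complex.conj_im] at h2
        linarith
      have hyim : y.im = 0 := by
        have := hBreal (a * t)
        rw [← hwreal] at this
        rw [← hydef] at this
        have h2 := congrArg Complex.im this
        rw [Complex.conj_im] at h2
        linarith
      -- a * Vs a via the ODEs
      have haV : a * Vs a = 2 * (((starRingEnd ℂ) x) * (w * DA w)).re
          + 2 * (((starRingEnd ℂ) y) * (w * DB w)).re := by
        rw [hVsdef]
        have e1 : (a : ℝ) * (2 * (((starRingEnd ℂ) x) * (DA w * (t:ℂ))).re
            + 2 * (((starRingEnd ℂ) y) * (DB w * (t:ℂ))).re)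
            = 2 * (((a:ℂ)) * (((starRingEnd ℂ) x) * (DA w * (t:ℂ)))).re
            + 2 * (((a:ℂ)) * (((starRingEnd ℂ) y) * (DB w * (t:ℂ)))).re := by
          simp [Complex.mul_re, Complex.ofReal_re, Complex.ofReal_im]
          ring
        rw [e1]
        congr 2
        · congr 1
          rw [hwdef]
          ring
        · congr 1
          rw [hwdef]
          ring
      rw [haV, hODEA w, hODEB w]
      -- everything is real now; expand
      set xr : ℝ := x.re with hxrdef
      set yr : ℝ := y.re with hyrdef
      have hsa : s a = xr ^ 2 + yr ^ 2 := by
        rw [hsdef]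
        simp only [Complex.normSq_apply, ← hwdef, ← hxdef, ← hydef, ← hxrdef, ← hyrdef,
          hxim, hyim]
        ring
      have hwre : w.re = a * t := by rw [hwreal]; simp
      have hwim : w.im = 0 := by rw [hwreal]; simp
      have hexpand : 2 * (((starRingEnd ℂ) x) * (-(P 0 1 : ℂ) * (w * x) - (P 1 1 : ℂ) * (w * y)
          + (ψ : ℂ) * y)).re
          + 2 * (((starRingEnd ℂ) y) * ((P 0 0 : ℂ) * (w * x) + (P 0 1 : ℂ) * (w * y)
          - 2 * (p : ℂ) * y)).re
          = 2 * (-(P 0 1) * (a*t) * xr^2 - P 1 1 * (a*t) * (xr*yr) + ψ * (xr*yr)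
            + P 0 0 * (a*t) * (xr*yr) + P 0 1 * (a*t) * yr^2 - 2*p*yr^2) := by
        simp only [Complex.mul_re, Complex.mul_im, Complex.add_re, Complex.add_im,
          Complex.sub_re, Complex.sub_im, Complex.neg_re, Complex.neg_im, Complex.conj_re,
          Complex.conj_im, Complex.ofReal_re, Complex.ofReal_im, Complex.re_ofNat,
          Complex.im_ofNat, hwre, hwim, ← hxrdef, ← hyrdef, hxim, hyim]
        ring
      rw [hexpand, hsa, hK'def]
      exact hb3_Vbound hapos hale
    have hszero : ∀ ε : ℝ, 0 < ε → ε ≤ 1 → s ε = 0 := by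
      intro ε hεpos hε1
      set K2 : ℝ := K' / ε with hK2def
      have hK2pos : 0 < K2 := div_pos hK'pos hεpos
      set m : ℝ → ℝ := fun a => Real.exp (K2 * a) * s a with hmdef
      have hm' : ∀ a : ℝ, HasDerivAt m
          (K2 * Real.exp (K2 * a) * s a + Real.exp (K2 * a) * Vs a) a := by
        intro a
        have h1 : HasDerivAt (fun a : ℝ => Real.exp (K2 * a)) (Real.exp (K2 * a) * K2) a := by
          have hlin : HasDerivAt (fun a : ℝ => K2 * a) K2 a := by
            simpa using (hasDerivAt_id a).const_mul K2
          exact (Real.hasDerivAt_exp (K2 * a)).comp a hlin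
        have := h1.mul (hs' a)
        refine this.congr_deriv ?_
        ring
      have hmge : ∀ a : ℝ, ε < a → a < 1 → 0 ≤ K2 * Real.exp (K2 * a) * s a
          + Real.exp (K2 * a) * Vs a := by
        intro a ha1 ha2
        have hapos : 0 < a := hεpos.trans ha1
        have hVb := hVbound a hapos ha2.le
        have hexppos : 0 < Real.exp (K2 * a) := Real.exp_pos _
        have key : 0 ≤ K2 * s a + Vs a := by
          by_contra hcon
          push_neg at hcon
          have h1 : a * (K2 * s a + Vs a) < 0 := mul_neg_of_pos_of_neg hapos hcon
          have h2 : K' * s a ≤ a * K2 * s a := by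
            have : ε * K2 = K' := by
              rw [hK2def]
              field_simp
            calc K' * s a = (ε * K2) * s a := by rw [this]
              _ ≤ (a * K2) * s a := by
                  apply mul_le_mul_of_nonneg_right _ (hsnn a)
                  nlinarith [hK2pos]
              _ = a * K2 * s a := by ring
          nlinarith [hVb, h2, h1]
        nlinarith [mul_nonneg hexppos.le key]
      have hmmono : MonotoneOn m (Set.Icc ε 1) := by
        apply hb3_mono hεpos (fun a _ => hm' a) hmge
      have hm1 : m ε ≤ m 1 := hmmono ⟨le_refl ε, hε1⟩ ⟨hε1, le_refl 1⟩ hε1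
      have hs1 : s 1 = 0 := by
        rw [hsdef]
        simp only [Complex.ofReal_one, one_mul, hABzero.1, hABzero.2]
        simp
      have hm1v : m 1 = 0 := by
        rw [hmdef]
        simp [hs1]
      have hmεnn : 0 ≤ m ε := mul_nonneg (Real.exp_pos _).le (hsnn ε)
      have hmε0 : m ε = 0 := le_antisymm (by rw [← hm1v]; exact hm1) hmεnn
      have := Real.exp_pos (K2 * ε)
      rw [hmdef] at hmε0
      simp only at hmε0
      nlinarith [hmε0, this, hsnn ε, (Real.exp_pos (K2 * ε))]
    -- contradiction via continuity at 0
    have hscont : Continuous s := by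
      apply Continuous.add
      · exact Complex.continuous_normSq.comp
          (hAcont.comp (Complex.continuous_ofReal.mul continuous_const))
      · exact Complex.continuous_normSq.comp
          (hBcont.comp (Complex.continuous_ofReal.mul continuous_const))
    have hs0val : s 0 = 1 := by
      rw [hsdef]
      simp only [Complex.ofReal_zero, zero_mul, hA0, hB0]
      simp
    have hlim1 : Tendsto s (nhdsWithin 0 (Set.Ioi 0)) (nhds 1) := by
      have := hscont.continuousAt (x := (0:ℝ))
      rw [← hs0val]
      exact this.continuousWithinAt
    have hlim2 : Tendsto s (nhdsWithin 0 (Set.Ioi 0)) (nhds 0) := by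
      have hev : s =ᶠ[nhdsWithin 0 (Set.Ioi 0)] (fun _ => (0:ℝ)) := by
        filter_upwards [Ioc_mem_nhdsGT (zero_lt_one)] with a ha
        exact hszero a ha.1 ha.2
      rw [Filter.tendsto_congr' hev]
      exact tendsto_const_nhds
    have : (1:ℝ) = 0 := tendsto_nhds_unique hlim1 hlim2
    norm_num at this

end
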